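/- Let a > 0 and let f, g : [-a,a] → ℝ be odd continuous functions. Then the set of continuous even functions x : [-a,a] → ℝ that are differentiable solutions of the Abel equation x'(t) = f(t)x(t)^3 + g(t)x(t)^2 on [-a,a] and satisfy x(a) = x(-a) is infinite. -/

import Mathlib

open Set

noncomputable def clampTo (r t : ℝ) : ℝ := max (-r) (min r t)

lemma clampTo_mem {r : ℝ} (hr : 0 ≤ r) (t : ℝ) : clampTo r t ∈ Icc (-r) r := by
  constructor
  · exact le_max_left _ _
  · exact max_le (by linarith) (min_le_left _ _)

lemma clampTo_eq {r t : ℝ} (ht : t ∈ Icc (-r) r) : clampTo r t = t := by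
  unfold clampTo
  rw [min_eq_right ht.2, max_eq_right ht.1]

lemma clampTo_neg {r : ℝ} (hr : 0 ≤ r) (t : ℝ) : clampTo r (-t) = -clampTo r t := by
  unfold clampTo
  rcases le_total t r with h1 | h1 <;> rcases le_total t (-r) with h2 | h2 <;>
    simp [max_def, min_def] <;> split_ifs <;> linarith

lemma clampTo_abs_le_self {r : ℝ} (hr : 0 ≤ r) (t : ℝ) : |clampTo r t| ≤ |t| := by
  rcases le_total 0 t with h | h
  · have h1 : clampTo r t = min r t := max_eq_right (le_trans (neg_nonpos.2 hr) (le_min hr h))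
    rw [h1, abs_of_nonneg (le_min hr h), abs_of_nonneg h]
    exact min_le_right _ _
  · have h1 : clampTo r t = max (-r) t := by unfold clampTo; rw [min_eq_right (le_trans h hr)]
    rw [h1, abs_of_nonpos (max_le (neg_nonpos.2 hr) h), abs_of_nonpos h]
    exact neg_le_neg (le_max_right _ _)

lemma clampTo_lip (r x y : ℝ) : |clampTo r x - clampTo r y| ≤ |x - y| := by
  unfold clampTo
  calc |max (-r) (min r x) - max (-r) (min r y)|
      = |max (min r x) (-r) - max (min r y) (-r)| := by rw [max_comm (-r), max_comm (-r)]
    _ ≤ |min r x - min r y| := abs_max_sub_max_le_abs _ _ _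
    _ ≤ |x - y| := by
        rcases le_total x r with h1 | h1 <;> rcases le_total y r with h2 | h2 <;>
          rw [min_def, min_def] <;> split_ifs <;>
          rcases abs_cases (x - y) with ⟨h3, h4⟩ | ⟨h3, h4⟩ <;>
          rcases abs_cases ((if r ≤ x then r else x) - if r ≤ y then r else y) with ⟨h5,h6⟩|⟨h5,h6⟩ <;>
          split_ifs at * <;> linarith

lemma clampTo_continuous (r : ℝ) : Continuous (clampTo r) :=
  continuous_const.max (continuous_const.min continuous_id)

/-- If `f, g` are odd continuous functions on `[-a,a]`, then there are
infinitely many continuous even differentiable solutions of the Abel equation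
`x' = f x³ + g x²` on `[-a,a]` satisfying `x a = x (-a)` (counted as functions on
`[-a,a]`, i.e. the set of their restrictions to `[-a,a]` is infinite). -/
theorem infinitely_many_closed_even_solutions
    (a : ℝ) (ha : 0 < a) (f g : ℝ → ℝ)
    (hf : ContinuousOn f (Set.Icc (-a) a)) (hg : ContinuousOn g (Set.Icc (-a) a))
    (hfodd : ∀ t ∈ Set.Icc (-a) a, f (-t) = -f t)
    (hgodd : ∀ t ∈ Set.Icc (-a) a, g (-t) = -g t) :
    ((Set.Icc (-a) a).restrict ''
      {x : ℝ → ℝ | ContinuousOn x (Set.Icc (-a) a) ∧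
        (∀ t ∈ Set.Icc (-a) a, x (-t) = x t) ∧
        (∀ t ∈ Set.Icc (-a) a,
          HasDerivWithinAt x (f t * x t ^ 3 + g t * x t ^ 2) (Set.Icc (-a) a) t) ∧
        x a = x (-a)}).Infinite := by
  -- bound on f, g
  obtain ⟨M0, hM0⟩ := (isCompact_Icc : IsCompact (Icc (-a) a)).exists_bound_of_continuousOn hf
  obtain ⟨M1, hM1⟩ := (isCompact_Icc : IsCompact (Icc (-a) a)).exists_bound_of_continuousOn hg
  set M : ℝ := max (max M0 M1) 0 + 1 with hMdef
  have hM : 0 < M := by positivity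
  have hmem : ∀ t : ℝ, clampTo a t ∈ Icc (-a) a := clampTo_mem ha.le
  set F : ℝ → ℝ := fun t => f (clampTo a t) with hFdef
  set G : ℝ → ℝ := fun t => g (clampTo a t) with hGdef
  have hFb : ∀ t, |F t| ≤ M := fun t => by
    have := hM0 _ (hmem t); simp only [Real.norm_eq_abs] at this
    simp only [hFdef, hMdef]
    calc |f (clampTo a t)| ≤ M0 := this
      _ ≤ max (max M0 M1) 0 + 1 := by
        have := le_max_left M0 M1
        have := le_max_left (max M0 M1) (0:ℝ)
        linarith
  have hGb : ∀ t, |G t| ≤ M := fun t => by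
    have := hM1 _ (hmem t); simp only [Real.norm_eq_abs] at this
    simp only [hGdef, hMdef]
    calc |g (clampTo a t)| ≤ M1 := this
      _ ≤ max (max M0 M1) 0 + 1 := by
        have := le_max_right M0 M1
        have := le_max_left (max M0 M1) (0:ℝ)
        linarith
  set v : ℝ → ℝ → ℝ := fun t x => F t * (clampTo 1 x) ^ 3 + G t * (clampTo 1 x) ^ 2 with hvdef
  have hFodd : ∀ t, F (-t) = -F t := fun t => by
    simp only [hFdef]; rw [clampTo_neg ha.le]; exact hfodd _ (hmem t)
  have hGodd : ∀ t, G (-t) = -G t := fun t => by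
    simp only [hGdef]; rw [clampTo_neg ha.le]; exact hgodd _ (hmem t)
  have hvodd : ∀ t x, v (-t) x = -v t x := fun t x => by
    simp only [hvdef, hFodd, hGodd]; ring
  have hFcont : Continuous F := hf.comp_continuous (clampTo_continuous a) hmem
  have hGcont : Continuous G := hg.comp_continuous (clampTo_continuous a) hmem
  set K : NNReal := Real.toNNReal (5 * M) with hKdef
  have hKcoe : (K : ℝ) = 5 * M := Real.coe_toNNReal _ (by positivity)
  have hvlip : ∀ t, LipschitzWith K (v t) := by
    intro t
    apply LipschitzWith.of_dist_le_mul
    intro x y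
    set p := clampTo 1 x
    set q := clampTo 1 y
    have hp : |p| ≤ 1 := abs_le.2 (clampTo_mem zero_le_one x)
    have hq : |q| ≤ 1 := abs_le.2 (clampTo_mem zero_le_one y)
    have hpq : |p - q| ≤ |x - y| := clampTo_lip 1 x y
    have h3 : |p ^ 3 - q ^ 3| ≤ 3 * |p - q| := by
      have he : p ^ 3 - q ^ 3 = (p - q) * (p ^ 2 + p * q + q ^ 2) := by ring
      rw [he, abs_mul, mul_comm]
      have : |p ^ 2 + p * q + q ^ 2| ≤ 3 := by
        have h1 := abs_mul p q
        have h2 : |p ^ 2| ≤ 1 := by rw [abs_pow]; nlinarith [abs_nonneg p]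
        have h4 : |q ^ 2| ≤ 1 := by rw [abs_pow]; nlinarith [abs_nonneg q]
        have h5 : |p * q| ≤ 1 := by rw [h1]; nlinarith [abs_nonneg p, abs_nonneg q]
        calc |p ^ 2 + p * q + q ^ 2| ≤ |p ^ 2 + p * q| + |q ^ 2| := abs_add_le _ _
          _ ≤ |p ^ 2| + |p * q| + |q ^ 2| := by gcongr; exact abs_add_le _ _
          _ ≤ 3 := by linarith
      exact mul_le_mul_of_nonneg_right this (abs_nonneg _)
    have h2 : |p ^ 2 - q ^ 2| ≤ 2 * |p - q| := by
      have he : p ^ 2 - q ^ 2 = (p - q) * (p + q) := by ring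
      rw [he, abs_mul, mul_comm]
      have : |p + q| ≤ 2 := by
        calc |p + q| ≤ |p| + |q| := abs_add_le _ _
          _ ≤ 2 := by linarith
      exact mul_le_mul_of_nonneg_right this (abs_nonneg _)
    have hd : v t x - v t y = F t * (p ^ 3 - q ^ 3) + G t * (p ^ 2 - q ^ 2) := by
      simp only [hvdef]; ring
    rw [Real.dist_eq, Real.dist_eq, hd, hKcoe]
    calc |F t * (p ^ 3 - q ^ 3) + G t * (p ^ 2 - q ^ 2)|
        ≤ |F t * (p ^ 3 - q ^ 3)| + |G t * (p ^ 2 - q ^ 2)| := abs_add_le _ _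
      _ = |F t| * |p ^ 3 - q ^ 3| + |G t| * |p ^ 2 - q ^ 2| := by rw [abs_mul, abs_mul]
      _ ≤ M * (3 * |p - q|) + M * (2 * |p - q|) :=
          add_le_add (mul_le_mul (hFb t) h3 (abs_nonneg _) hM.le)
            (mul_le_mul (hGb t) h2 (abs_nonneg _) hM.le)
      _ = 5 * M * |p - q| := by ring
      _ ≤ 5 * M * |x - y| := by
          exact mul_le_mul_of_nonneg_left hpq (by positivity)
  have hvb0 : ∀ t x, |v t x| ≤ |F t| * |clampTo 1 x| ^ 3 + |G t| * |clampTo 1 x| ^ 2 := by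
    intro t x
    calc |v t x| ≤ |F t * clampTo 1 x ^ 3| + |G t * clampTo 1 x ^ 2| := abs_add_le _ _
      _ = |F t| * |clampTo 1 x| ^ 3 + |G t| * |clampTo 1 x| ^ 2 := by
          rw [abs_mul, abs_mul, abs_pow, abs_pow]
  have hvb1 : ∀ t x, |v t x| ≤ 2 * M := by
    intro t x
    have h0 := hvb0 t x
    have hc : |clampTo 1 x| ≤ 1 := abs_le.2 (clampTo_mem zero_le_one x)
    have hcn : 0 ≤ |clampTo 1 x| := abs_nonneg _
    have e3 : |clampTo 1 x| ^ 3 ≤ 1 := by nlinarith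
    have e2 : |clampTo 1 x| ^ 2 ≤ 1 := by nlinarith
    have b1 : |F t| * |clampTo 1 x| ^ 3 ≤ M * 1 :=
      mul_le_mul (hFb t) e3 (by positivity) hM.le
    have b2 : |G t| * |clampTo 1 x| ^ 2 ≤ M * 1 :=
      mul_le_mul (hGb t) e2 (by positivity) hM.le
    linarith
  have hvb2 : ∀ t x, |v t x| ≤ 2 * M * |x| := by
    intro t x
    have h0 := hvb0 t x
    have hc : |clampTo 1 x| ≤ 1 := abs_le.2 (clampTo_mem zero_le_one x)
    have hcx : |clampTo 1 x| ≤ |x| := clampTo_abs_le_self zero_le_one x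
    have hcn : 0 ≤ |clampTo 1 x| := abs_nonneg _
    have e3 : |clampTo 1 x| ^ 3 ≤ |x| := by nlinarith
    have e2 : |clampTo 1 x| ^ 2 ≤ |x| := by nlinarith
    have b1 : |F t| * |clampTo 1 x| ^ 3 ≤ M * |x| :=
      mul_le_mul (hFb t) e3 (by positivity) hM.le
    have b2 : |G t| * |clampTo 1 x| ^ 2 ≤ M * |x| :=
      mul_le_mul (hGb t) e2 (by positivity) hM.le
    linarith
  set ε : ℝ := Real.exp (-(2 * M * a)) with hεdef
  have hεpos : 0 < ε := Real.exp_pos _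
  have h0mem : (0 : ℝ) ∈ Icc (-a) a := ⟨by linarith, ha.le⟩
  have key : ∀ c : Ioo (0 : ℝ) ε, ∃ y : ℝ → ℝ,
      (ContinuousOn y (Icc (-a) a) ∧
        (∀ t ∈ Icc (-a) a, y (-t) = y t) ∧
        (∀ t ∈ Icc (-a) a,
          HasDerivWithinAt y (f t * y t ^ 3 + g t * y t ^ 2) (Icc (-a) a) t) ∧
        y a = y (-a)) ∧ y 0 = c := by
    rintro ⟨c, hc0, hcε⟩
    -- Picard–Lindelöf existence
    have hpl : IsPicardLindelof v (tmin := -a) (tmax := a) ⟨0, h0mem⟩ c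
        (2 * M * a).toNNReal 0 (2 * M).toNNReal K := by
      refine ⟨fun t _ => (hvlip t).lipschitzOnWith, ?_, ?_, ?_⟩
      · intro x _
        exact ((hFcont.mul continuous_const).add (hGcont.mul continuous_const)).continuousOn
      · intro t _ x _
        simpa [Real.norm_eq_abs, Real.coe_toNNReal _ (by positivity : (0:ℝ) ≤ 2 * M)] using hvb1 t x
      · have hmax : max (a - 0) (0 - -a) = a := by
          rw [sub_zero, zero_sub, neg_neg, max_self]
        simp only [hmax, Real.coe_toNNReal _ (by positivity : (0:ℝ) ≤ 2 * M),
          NNReal.coe_zero, sub_zero, Real.coe_toNNReal _ (by positivity : (0:ℝ) ≤ 2 * M * a),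
          zero_sub, neg_neg, max_self, le_refl]
    obtain ⟨y, hy0, hy'⟩ := hpl.exists_eq_forall_mem_Icc_hasDerivWithinAt₀
    have hycont : ContinuousOn y (Icc (-a) a) := fun t ht => (hy' t ht).continuousWithinAt
    -- derivative facts for composition with neg
    have hnegmem : ∀ t ∈ Icc (-a) a, -t ∈ Icc (-a) a := by
      intro t ht; exact ⟨by linarith [ht.2], by linarith [ht.1]⟩
    have hzderiv : ∀ t ∈ Icc (-a) a,
        HasDerivWithinAt (fun s => y (-s)) (-(v (-t) (y (-t)))) (Icc (-a) a) t := by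
      intro t ht
      have hcomp := (hy' (-t) (hnegmem t ht)).scomp (x := t)
        ((hasDerivAt_neg t).hasDerivWithinAt) (fun s hs => hnegmem s hs)
      simp [Function.comp] at hcomp; exact hcomp
    -- Grönwall bound, right half
    have hIcc_sub : Icc (0 : ℝ) a ⊆ Icc (-a) a := Icc_subset_Icc (by linarith) le_rfl
    have hnhds : ∀ t ∈ Ico (0 : ℝ) a, Icc (-a) a ∈ nhdsWithin t (Ici t) := by
      intro t ht
      exact Icc_mem_nhdsGE_of_mem ⟨by linarith [ht.1], ht.2⟩
    have hright : ∀ t ∈ Icc (0 : ℝ) a, ‖y t‖ ≤ gronwallBound c (2 * M) 0 (t - 0) := by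
      apply norm_le_gronwallBound_of_norm_deriv_right_le
        (f' := fun t => v t (y t)) (hycont.mono hIcc_sub)
      · intro t ht
        exact ((hy' t (hIcc_sub (mem_Icc_of_Ico ht))).mono_of_mem_nhdsWithin (hnhds t ht))
      · rw [hy0]; simp [Real.norm_eq_abs, abs_of_pos hc0]
      · intro t _
        simpa [Real.norm_eq_abs] using (hvb2 t (y t)).trans (le_of_eq (by ring))
    have hleft : ∀ t ∈ Icc (0 : ℝ) a, ‖y (-t)‖ ≤ gronwallBound c (2 * M) 0 (t - 0) := by
      apply norm_le_gronwallBound_of_norm_deriv_right_le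
        (f' := fun t => -(v (-t) (y (-t))))
      · exact hycont.comp continuousOn_neg (fun s hs => hnegmem s (hIcc_sub hs))
      · intro t ht
        exact ((hzderiv t (hIcc_sub (mem_Icc_of_Ico ht))).mono_of_mem_nhdsWithin (hnhds t ht))
      · rw [neg_zero, hy0]; simp [Real.norm_eq_abs, abs_of_pos hc0]
      · intro t _
        simp only [Real.norm_eq_abs, abs_neg]
        simpa [Real.norm_eq_abs] using (hvb2 (-t) (y (-t))).trans (le_of_eq (by ring))
    have hbnd : ∀ t ∈ Icc (-a) a, |y t| ≤ c * Real.exp (2 * M * a) := by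
      intro t ht
      have hmono : ∀ s ∈ Icc (0 : ℝ) a, gronwallBound c (2 * M) 0 (s - 0) ≤
          c * Real.exp (2 * M * a) := by
        intro s hs
        rw [gronwallBound_ε0, sub_zero]
        have := Real.exp_le_exp.2 (by nlinarith [hs.2] : 2 * M * s ≤ 2 * M * a)
        nlinarith [Real.exp_pos (2 * M * s)]
      rcases le_total 0 t with h | h
      · have := hright t ⟨h, ht.2⟩
        rw [Real.norm_eq_abs] at this
        exact this.trans (hmono t ⟨h, ht.2⟩)
      · have := hleft (-t) ⟨by linarith, by linarith [ht.1]⟩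
        rw [Real.norm_eq_abs, neg_neg] at this
        exact this.trans (hmono (-t) ⟨by linarith, by linarith [ht.1]⟩)
    have hsmall : ∀ t ∈ Icc (-a) a, |y t| ≤ 1 := by
      intro t ht
      have h1 := hbnd t ht
      have h2 : c * Real.exp (2 * M * a) < ε * Real.exp (2 * M * a) := by
        exact mul_lt_mul_of_pos_right hcε (Real.exp_pos _)
      have h3 : ε * Real.exp (2 * M * a) = 1 := by
        rw [hεdef, ← Real.exp_add]; simp
      linarith
    have hclampy : ∀ t ∈ Icc (-a) a, clampTo 1 (y t) = y t := by
      intro t ht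
      exact clampTo_eq (abs_le.1 (hsmall t ht))
    -- evenness via uniqueness
    have heven : ∀ t ∈ Icc (-a) a, y (-t) = y t := by
      have huniq : EqOn (fun s => y (-s)) y (Icc (-a) a) := by
        apply ODE_solution_unique_of_mem_Icc (v := v) (s := fun _ => (univ : Set ℝ))
          (K := K) (fun t _ => (hvlip t).lipschitzOnWith) (t₀ := 0)
          ⟨neg_lt_zero.2 ha, ha⟩
        · exact hycont.comp continuousOn_neg (fun s hs => hnegmem s hs)
        · intro t ht
          have h1 : HasDerivAt (fun s => y (-s)) (-(v (-t) (y (-t)))) t :=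
            (hzderiv t (Ioo_subset_Icc_self ht)).hasDerivAt
              (Icc_mem_nhds ht.1 ht.2)
          have h2 : -(v (-t) (y (-t))) = v t ((fun s => y (-s)) t) := by
            simp only [hvodd, neg_neg]
          rwa [h2] at h1
        · exact fun _ _ => mem_univ _
        · exact hycont
        · intro t ht
          exact (hy' t (Ioo_subset_Icc_self ht)).hasDerivAt (Icc_mem_nhds ht.1 ht.2)
        · exact fun _ _ => mem_univ _
        · simp
      intro t ht
      exact huniq ht
    refine ⟨y, ⟨hycont, heven, ?_, (heven a ⟨by linarith, le_rfl⟩).symm⟩, ?_⟩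
    · intro t ht
      have h1 := hy' t ht
      have h2 : v t (y t) = f t * y t ^ 3 + g t * y t ^ 2 := by
        simp only [hvdef, hclampy t ht, hFdef, hGdef, clampTo_eq ht]
      rwa [h2] at h1
    · rw [hy0]
  choose Y hY1 hY2 using key
  haveI : Infinite (Ioo (0 : ℝ) ε) := (Set.Ioo_infinite hεpos).to_subtype
  apply Set.infinite_of_injective_forall_mem
    (f := fun c : Ioo (0 : ℝ) ε => (Icc (-a) a).restrict (Y c))
  · intro c d h
    have h0 := congrFun h ⟨0, h0mem⟩
    simp only [restrict_apply] at h0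
    ext
    rw [← hY2 c, ← hY2 d]; exact h0
  · intro c
    exact mem_image_of_mem _ (hY1 c)
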